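/- The operator 1 + h·B with Bf := |f'| on D(B) = BUC¹(ℝ) is not surjective onto BUC(ℝ) for any h > 0. Concretely, for u(x) := (1 − |x|)·1_{[−1,1]}(x), there is no f ∈ BUC¹(ℝ) with f(x) + h|f'(x)| = u(x) for all x ∈ ℝ. -/

import Mathlib

open Set Filter Topology

lemma keyLemma (h : ℝ) (hh : 0 < h) (ψ ψ' : ℝ → ℝ)
    (hd : ∀ x, HasDerivAt ψ (ψ' x) x) (hc : Continuous ψ')
    (M : ℝ) (hb : ∀ x, |ψ x| ≤ M)
    (hineq : ∀ x, |ψ x| ≤ h * |ψ' x|)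
    (x₀ : ℝ) (h0 : 0 < ψ x₀) (h1 : 0 < ψ' x₀) : False := by
  have hψdiff : Differentiable ℝ ψ := fun x => (hd x).differentiableAt
  have hψcont : Continuous ψ := hψdiff.continuous
  -- Claim: ψ' > 0 on [x₀, ∞)
  have claim : ∀ t, x₀ ≤ t → 0 < ψ' t := by
    by_contra hcon
    push_neg at hcon
    obtain ⟨t₁, ht₁, ht₁'⟩ := hcon
    set Z : Set ℝ := {t | x₀ ≤ t ∧ ψ' t ≤ 0} with hZdef
    have hZne : Z.Nonempty := ⟨t₁, ht₁, ht₁'⟩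
    have hZclosed : IsClosed Z := by
      have : Z = {t | x₀ ≤ t} ∩ ψ' ⁻¹' (Iic 0) := rfl
      rw [this]
      exact (isClosed_le continuous_const continuous_id).inter (isClosed_Iic.preimage hc)
    have hbdd : BddBelow Z := ⟨x₀, fun t ht => ht.1⟩
    set ts := sInf Z with hts
    have htsZ : ts ∈ Z := hZclosed.csInf_mem hZne hbdd
    have hx₀ts : x₀ < ts := by
      rcases lt_or_eq_of_le htsZ.1 with h' | h'
      · exact h'
      · exfalso; rw [← h'] at htsZ; linarith [htsZ.2]
    have hpos : ∀ t ∈ Ico x₀ ts, 0 < ψ' t := by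
      intro t ht
      by_contra hcon2
      push_neg at hcon2
      have : t ∈ Z := ⟨ht.1, hcon2⟩
      exact absurd (csInf_le hbdd this) (not_le.mpr ht.2)
    have hmono : StrictMonoOn ψ (Icc x₀ ts) := by
      apply strictMonoOn_of_deriv_pos (convex_Icc _ _) (hψcont.continuousOn)
      intro t ht
      rw [interior_Icc] at ht
      rw [(hd t).deriv]
      exact hpos t ⟨ht.1.le, ht.2⟩
    have hψts : 0 < ψ ts := lt_trans h0 (hmono (left_mem_Icc.mpr hx₀ts.le) (right_mem_Icc.mpr hx₀ts.le) hx₀ts)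
    have hts_neg : ψ' ts < 0 := by
      have h2 := hineq ts
      rw [abs_of_pos hψts] at h2
      rcases lt_or_eq_of_le htsZ.2 with h' | h'
      · exact h'
      · exfalso
        rw [h'] at h2; simp at h2; linarith
    -- ψ' < 0 near ts contradicts ψ' > 0 on [x₀, ts)
    have hopen : IsOpen {s | ψ' s < 0} := isOpen_lt hc continuous_const
    obtain ⟨ε, hε, hball⟩ := Metric.isOpen_iff.mp hopen ts hts_neg
    set s := max x₀ (ts - ε/2) with hs
    have hs1 : x₀ ≤ s := le_max_left _ _
    have hs2 : s < ts := max_lt hx₀ts (by linarith)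
    have hs3 : ψ' s < 0 := by
      apply hball
      rw [Metric.mem_ball, Real.dist_eq, abs_lt]
      constructor
      · have : ts - ε/2 ≤ s := le_max_right _ _
        linarith
      · linarith
    linarith [hpos s ⟨hs1, hs2⟩]
  -- Now ψ grows linearly, contradicting boundedness
  set c := ψ x₀ with hc0
  have hψge : ∀ t, x₀ ≤ t → c ≤ ψ t := by
    intro t ht
    have hmono : MonotoneOn ψ (Ici x₀) := by
      apply monotoneOn_of_deriv_nonneg (convex_Ici _) hψcont.continuousOn
        (hψdiff.differentiableOn)
      intro s hs
      rw [interior_Ici] at hs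
      rw [(hd s).deriv]
      exact (claim s hs.le).le
    exact hmono (self_mem_Ici) ht ht
  have hd' : ∀ t, x₀ ≤ t → c / h ≤ ψ' t := by
    intro t ht
    have h2 := hineq t
    have h3 := hψge t ht
    rw [abs_of_pos (lt_of_lt_of_le h0 h3), abs_of_pos (claim t ht)] at h2
    rw [div_le_iff₀ hh]
    nlinarith [claim t ht]
  -- g x = ψ x - (c/h) x is monotone on [x₀,∞)
  set g : ℝ → ℝ := fun x => ψ x - (c/h) * x with hg
  have hgmono : MonotoneOn g (Ici x₀) := by
    have hgdiff : Differentiable ℝ g := hψdiff.sub ((differentiable_const _).mul differentiable_id)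
    apply monotoneOn_of_deriv_nonneg (convex_Ici _)
      (hgdiff.continuous.continuousOn) (hgdiff.differentiableOn)
    intro s hs
    rw [interior_Ici] at hs
    have hgd : HasDerivAt g (ψ' s - c/h) s := by
      exact ((hd s).sub ((hasDerivAt_id s).const_mul (c/h))).congr_deriv (by ring)
    rw [hgd.deriv]
    linarith [hd' s hs.le]
  set x₁ := x₀ + (h/c) * (2*|M| + 1) with hx₁
  have hcpos : 0 < c := h0
  have hx₁ge : x₀ ≤ x₁ := by
    have h' : 0 ≤ (h/c) * (2*|M| + 1) := by positivity
    rw [hx₁]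
    linarith
  have := hgmono self_mem_Ici hx₁ge hx₁ge
  -- g x₀ ≤ g x₁ : ψ x₀ - (c/h) x₀ ≤ ψ x₁ - (c/h) x₁
  have hkey : ψ x₀ + (c/h) * (x₁ - x₀) ≤ ψ x₁ := by
    simp only [hg] at this; linarith
  have hcomp : (c/h) * (x₁ - x₀) = 2*|M| + 1 := by
    rw [hx₁]; field_simp; ring
  rw [hcomp] at hkey
  have hM1 := hb x₁
  have ha1 : ψ x₁ ≤ |ψ x₁| := le_abs_self _
  have ha2 : M ≤ |M| := le_abs_self _
  have ha3 : (0:ℝ) ≤ |M| := abs_nonneg _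
  linarith



/-- The tent function `u(x) = (1 - |x|) 1_{[-1,1]}(x)`. -/
noncomputable def tent (x : ℝ) : ℝ := if |x| ≤ 1 then 1 - |x| else 0

/-- The operator `1 + h B` with `B f = |f'|` on `D(B) = BUC¹(ℝ)` is not surjective: for any
`h > 0` there is no `f ∈ BUC¹(ℝ)` with `f(x) + h|f'(x)| = u(x)` for all `x`, where `u` is the
tent function. -/
lemma tent_even (x : ℝ) : tent (-x) = tent x := by simp [tent, abs_neg]

theorem stmt11 (h : ℝ) (hh : 0 < h) :
    ¬ ∃ f : ℝ → ℝ, (∃ C, ∀ x, |f x| ≤ C) ∧ UniformContinuous f ∧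
      Differentiable ℝ f ∧ (∃ C, ∀ x, |deriv f x| ≤ C) ∧ UniformContinuous (deriv f) ∧
      ∀ x, f x + h * |deriv f x| = tent x := by
  rintro ⟨f, ⟨C, hC⟩, _hu, hdf, ⟨C', hC'⟩, hudf, heq⟩
  have hf'cont : Continuous (deriv f) := hudf.continuous
  have hasD : ∀ x, HasDerivAt f (deriv f x) x := fun x => (hdf x).hasDerivAt
  -- derivative of x ↦ f (-x)
  have hasDneg : ∀ x, HasDerivAt (fun y => f (-y)) (-(deriv f (-x))) x := by
    intro x
    have := (hasD (-x)).comp x (hasDerivAt_neg x)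
    exact this.congr_deriv (by ring)
  set φ : ℝ → ℝ := fun x => f x - f (-x) with hφ
  set φ' : ℝ → ℝ := fun x => deriv f x + deriv f (-x) with hφ'
  have hφd : ∀ x, HasDerivAt φ (φ' x) x := by
    intro x
    have := (hasD x).sub (hasDneg x)
    exact this.congr_deriv (by simp [hφ'])
  have hφ'cont : Continuous φ' := hf'cont.add (hf'cont.comp continuous_neg)
  have hφbd : ∀ x, |φ x| ≤ C + C := fun x =>
    (abs_sub (f x) (f (-x))).trans (add_le_add (hC x) (hC (-x)))
  have hφineq : ∀ x, |φ x| ≤ h * |φ' x| := by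
    intro x
    have e1 := heq x
    have e2 := heq (-x)
    rw [tent_even] at e2
    have hx : φ x = h * (|deriv f (-x)| - |deriv f x|) := by
      simp only [hφ]; nlinarith [e1, e2]
    rw [hx, abs_mul, abs_of_pos hh]
    have key : |(|deriv f (-x)| - |deriv f x|)| ≤ |deriv f (-x) + deriv f x| := by
      have := abs_abs_sub_abs_le_abs_sub (deriv f (-x)) (-(deriv f x))
      simpa [sub_neg_eq_add] using this
    have : |deriv f (-x) + deriv f x| = |φ' x| := by rw [hφ']; ring_nf
    rw [this] at key
    exact mul_le_mul_of_nonneg_left key hh.le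
  -- φ is identically zero
  have hφ0 : ∀ x, φ x = 0 := by
    intro x
    by_contra hne
    -- get a point where φ > 0
    have hodd : ∀ y, φ (-y) = -φ y := by intro y; simp [hφ]
    obtain ⟨x₁, hx₁⟩ : ∃ x₁, 0 < φ x₁ := by
      rcases lt_or_gt_of_ne hne with h' | h'
      · exact ⟨-x, by rw [hodd]; linarith⟩
      · exact ⟨x, h'⟩
    have hφ'ne : φ' x₁ ≠ 0 := by
      intro h0
      have := hφineq x₁
      rw [h0, abs_zero, mul_zero] at this
      have := abs_nonneg (φ x₁)
      have : |φ x₁| = 0 := le_antisymm ‹|φ x₁| ≤ 0› this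
      rw [abs_eq_zero] at this; linarith
    rcases lt_or_gt_of_ne hφ'ne with hneg | hpos
    · -- reflect: ψ x = φ (-x)
      have hd2 : ∀ y, HasDerivAt (fun y => φ (-y)) (-(φ' (-y))) y := by
        intro y
        exact ((hφd (-y)).comp y (hasDerivAt_neg y)).congr_deriv (by ring)
      have hc2 : Continuous (fun y => -(φ' (-y))) :=
        (hφ'cont.comp continuous_neg).neg
      have hb2 : ∀ y, |(fun y => φ (-y)) y| ≤ C + C := fun y => hφbd (-y)
      have hi2 : ∀ y, |(fun y => φ (-y)) y| ≤ h * |(fun y => -(φ' (-y))) y| := by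
        intro y; simpa [abs_neg] using hφineq (-y)
      exact keyLemma h hh _ _ hd2 hc2 (C + C) hb2 hi2 (-x₁)
        (by simpa using hx₁) (by simpa using hneg)
    · exact keyLemma h hh φ φ' hφd hφ'cont (C + C) hφbd hφineq x₁ hx₁ hpos
  -- f is even, so deriv f 0 = 0
  have feven : ∀ x, f (-x) = f x := by
    intro x; have := hφ0 x; simp only [hφ] at this; linarith
  have hf'0 : deriv f 0 = 0 := by
    have h1 : HasDerivAt f (-(deriv f 0)) 0 := by
      have := hasDneg 0
      rw [neg_zero] at this
      exact this.congr_of_eventuallyEq (Filter.Eventually.of_forall fun y => (feven y).symm)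
    have := (hasD 0).unique h1
    linarith
  have hf0 : f 0 = 1 := by
    have := heq 0
    rw [hf'0] at this
    simpa [tent] using this
  have hle : ∀ x, f x ≤ tent x := by
    intro x
    have := heq x
    nlinarith [abs_nonneg (deriv f x)]
  -- slope contradiction at 0+
  have hs : HasDerivWithinAt f 0 (Ioi 0) 0 := by
    have := (hasD 0).hasDerivWithinAt (s := Ioi (0:ℝ))
    rwa [hf'0] at this
  have hdiff : Ioi (0:ℝ) \ {0} = Ioi 0 := Set.diff_singleton_eq_self (by simp)
  have htend : Tendsto (slope f 0) (𝓝[Ioi 0] 0) (𝓝 0) := by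
    have := hasDerivWithinAt_iff_tendsto_slope.mp hs
    rwa [hdiff] at this
  have hev : ∀ᶠ x in 𝓝[Ioi (0:ℝ)] 0, slope f 0 x ≤ -1 := by
    filter_upwards [Ioo_mem_nhdsGT_of_mem (by norm_num : (0:ℝ) ∈ Ico 0 1)] with x hx
    have hx0 : 0 < x := hx.1
    have hx1 : x < 1 := hx.2
    have htx : tent x = 1 - x := by
      rw [tent, if_pos (by rw [abs_of_pos hx0]; linarith), abs_of_pos hx0]
    have hfx : f x ≤ 1 - x := htx ▸ hle x
    rw [slope_def_field, hf0]
    rw [div_le_iff₀ (by simpa using hx0)]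
    simp only [sub_zero]
    linarith
  have : (0:ℝ) ≤ -1 := le_of_tendsto htend hev
  linarith
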